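/- arXiv:2305.03939 — 3 statements merged into one kernel-verified Lean document; each statement's English description precedes it below -/
import Mathlib

section
/- (Theorem 1, coefficient characterization) Let T ⊆ {1, …, N} be nonempty and let u : ℝ^N → ℝ be an ANOVA component function for T, i.e. u is Borel measurable, square-integrable with respect to μ, depends only on the coordinates in T (u(ξ) = u(ξ') whenever ξ_t = ξ'_t for all t ∈ T), and has zero partial mean in every coordinate t ∈ T (for μ-a.e. ξ, ∫_ℝ u(ξ_1, …, ξ_{t-1}, s, ξ_{t+1}, …, ξ_N) dμ_t(s) = 0). Then for every multi-index i ∈ ℕ^N that does not belong to M_T, the Fourier coefficient of u against Φ_i vanishes: ∫_{ℝ^N} u(ξ) Φ_i(ξ) dμ(ξ) = 0. -/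
open MeasureTheory

/-- A product of integrable one-coordinate functions is integrable w.r.t. a product measure. -/
theorem integrable_pi_prod' {n : ℕ} (μ : Fin n → Measure ℝ) [∀ i, SigmaFinite (μ i)]
    {f : Fin n → ℝ → ℝ} (hf : ∀ i, Integrable (f i) (μ i)) :
    Integrable (fun x : Fin n → ℝ ↦ ∏ i, f i (x i)) (Measure.pi μ) := by
  induction n with
  | zero =>
      simp only [Finset.univ_eq_empty, Finset.prod_empty, integrable_const_iff, one_ne_zero,
        Measure.pi_empty_univ, ENNReal.one_lt_top, or_true, false_or]
      exact ⟨by rw [Measure.pi_empty_univ]; exact ENNReal.one_lt_top⟩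
  | succ n n_ih =>
      have h := (measurePreserving_piFinSuccAbove μ 0).symm
      rw [← h.integrable_comp_emb (MeasurableEquiv.measurableEmbedding _)]
      simp_rw [MeasurableEquiv.piFinSuccAbove_symm_apply, Fin.insertNthEquiv,
        Fin.prod_univ_succ, Fin.insertNth_zero]
      simp only [Fin.zero_succAbove, Function.comp_def, Fin.cons_zero, Fin.cons_succ,
        Equiv.coe_fn_mk]
      exact Integrable.mul_prod (hf 0) (n_ih _ fun i => hf _)

/-- Updating one coordinate of a product of probability measures with an independent copy is
measure preserving. -/
theorem measurePreserving_update_pi {N : ℕ} (μk : Fin N → Measure ℝ)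
    [∀ k, IsProbabilityMeasure (μk k)] (t : Fin N) :
    MeasurePreserving (fun p : (Fin N → ℝ) × ℝ => Function.update p.1 t p.2)
      ((Measure.pi μk).prod (μk t)) (Measure.pi μk) := by
  refine ⟨measurable_update', ?_⟩
  refine (Measure.pi_eq fun s hs => ?_).symm
  rw [Measure.map_apply measurable_update' (MeasurableSet.univ_pi hs)]
  have hpre : (fun p : (Fin N → ℝ) × ℝ => Function.update p.1 t p.2) ⁻¹' Set.pi Set.univ s
      = (Set.pi Set.univ (Function.update s t Set.univ)) ×ˢ (s t) := by
    ext ⟨ξ, y⟩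
    simp only [Set.mem_preimage, Set.mem_univ_pi, Set.mem_prod]
    constructor
    · intro h
      refine ⟨fun k => ?_, by simpa using h t⟩
      rcases eq_or_ne k t with rfl | hk
      · simp
      · simpa [Function.update_of_ne hk] using h k
    · rintro ⟨h1, h2⟩ k
      rcases eq_or_ne k t with rfl | hk
      · simpa using h2
      · have := h1 k
        simpa [Function.update_of_ne hk] using this
  rw [hpre, Measure.prod_prod, Measure.pi_pi]
  have hval : ∀ k, μk k (Function.update s t Set.univ k)
      = Function.update (fun k => μk k (s k)) t 1 k := by
    intro k
    rcases eq_or_ne k t with rfl | hk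
    · simp
    · simp [Function.update_of_ne hk]
  calc (∏ k, μk k (Function.update s t Set.univ k)) * μk t (s t)
      = (∏ k, Function.update (fun k => μk k (s k)) t 1 k) * μk t (s t) := by
        rw [Finset.prod_congr rfl fun k _ => hval k]
    _ = ∏ k, μk k (s k) := by
        rw [Finset.prod_update_of_mem (Finset.mem_univ t), one_mul,
          Finset.sdiff_singleton_eq_erase, mul_comm,
          Finset.mul_prod_erase Finset.univ (fun k => μk k (s k)) (Finset.mem_univ t)]

/-- Fubini for updating one coordinate. -/
theorem integral_update_pi {N : ℕ} (μk : Fin N → Measure ℝ)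
    [∀ k, IsProbabilityMeasure (μk k)] (t : Fin N) {f : (Fin N → ℝ) → ℝ}
    (hf : Integrable f (Measure.pi μk)) :
    ∫ ξ, f ξ ∂(Measure.pi μk)
      = ∫ ξ, ∫ s, f (Function.update ξ t s) ∂(μk t) ∂(Measure.pi μk) := by
  have hmp := measurePreserving_update_pi μk t
  have hfm : AEStronglyMeasurable f
      (Measure.map (fun p : (Fin N → ℝ) × ℝ => Function.update p.1 t p.2)
        ((Measure.pi μk).prod (μk t))) := by
    rw [hmp.map_eq]; exact hf.1
  have hint : Integrable (fun p : (Fin N → ℝ) × ℝ => f (Function.update p.1 t p.2))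
      ((Measure.pi μk).prod (μk t)) := by
    have := (integrable_map_measure hfm hmp.aemeasurable).mp (by rwa [hmp.map_eq])
    exact this
  calc ∫ ξ, f ξ ∂(Measure.pi μk)
      = ∫ p : (Fin N → ℝ) × ℝ, f (Function.update p.1 t p.2)
          ∂((Measure.pi μk).prod (μk t)) := by
        conv_lhs => rw [← hmp.map_eq]
        exact integral_map hmp.aemeasurable hfm
    _ = ∫ ξ, ∫ s, f (Function.update ξ t s) ∂(μk t) ∂(Measure.pi μk) :=
        integral_prod _ hint

/-- Theorem 1, coefficient characterization: If `u` is an ANOVA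
component function for a nonempty `T ⊆ {1,…,N}` (square-integrable, depending only
on the coordinates in `T`, with zero partial mean in every coordinate `t ∈ T`),
then for every multi-index `i ∉ M_T` the Fourier coefficient `∫ u Φ_i dμ`
vanishes, where `M_T = {i : i_t ≠ 0 for t ∈ T, i_t = 0 for t ∉ T}`. -/
theorem anova_component_fourier_coefficients_supported_on_MT
    (N : ℕ) (μk : Fin N → Measure ℝ) [∀ k, IsProbabilityMeasure (μk k)]
    (φ : Fin N → ℕ → ℝ → ℝ)
    (hmeas : ∀ k n, Measurable (φ k n))
    (horth : ∀ k m n, ∫ x, φ k m x * φ k n x ∂(μk k) = if m = n then 1 else 0)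
    (hone : ∀ k, φ k 0 = fun _ => 1)
    (T : Set (Fin N)) (hT : T.Nonempty)
    (u : (Fin N → ℝ) → ℝ) (humeas : Measurable u)
    (hu2 : MemLp u 2 (Measure.pi μk))
    (hdep : ∀ ξ ξ' : Fin N → ℝ, (∀ t ∈ T, ξ t = ξ' t) → u ξ = u ξ')
    (hzero : ∀ t ∈ T, ∀ᵐ ξ ∂(Measure.pi μk),
      ∫ s, u (Function.update ξ t s) ∂(μk t) = 0)
    (i : Fin N → ℕ)
    (hi : i ∉ {i : Fin N → ℕ | (∀ t ∈ T, i t ≠ 0) ∧ ∀ t ∉ T, i t = 0}) :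
    ∫ ξ : Fin N → ℝ, u ξ * ∏ k, φ k (i k) (ξ k) ∂(Measure.pi μk) = 0 := by
  -- each φ k m is in L²
  have hsq : ∀ k m, Integrable (fun x => φ k m x ^ 2) (μk k) := by
    intro k m
    by_contra h
    have h1 := horth k m m
    rw [if_pos rfl, show (fun x => φ k m x * φ k m x) = fun x => φ k m x ^ 2 from
      funext fun x => (sq (φ k m x)).symm, integral_undef h] at h1
    exact one_ne_zero h1.symm
  -- the product Φ is in L²
  have hΦmeas : Measurable (fun ξ : Fin N → ℝ => ∏ k, φ k (i k) (ξ k)) :=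
    Finset.univ.measurable_prod fun k _ => (hmeas k (i k)).comp (measurable_pi_apply k)
  have hΦ2 : MemLp (fun ξ : Fin N → ℝ => ∏ k, φ k (i k) (ξ k)) 2 (Measure.pi μk) := by
    rw [memLp_two_iff_integrable_sq hΦmeas.aestronglyMeasurable]
    have : Integrable (fun ξ : Fin N → ℝ => ∏ k, φ k (i k) (ξ k) ^ 2) (Measure.pi μk) :=
      integrable_pi_prod' μk fun k => hsq k (i k)
    simpa [Finset.prod_pow] using this
  -- the integrand is integrable
  have hint : Integrable (fun ξ : Fin N → ℝ => u ξ * ∏ k, φ k (i k) (ξ k)) (Measure.pi μk) := by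
    have hpqr : (1 : ENNReal) / 1 = 1 / 2 + 1 / 2 := by
      rw [ENNReal.add_halves, div_one]
    have := (MemLp.smul (r := 1) hΦ2 hu2 : MemLp
      (u • (fun ξ : Fin N → ℝ => ∏ k, φ k (i k) (ξ k))) 1 (Measure.pi μk))
    rw [memLp_one_iff_integrable] at this
    exact this
  simp only [Set.mem_setOf_eq, not_and_or, not_forall] at hi
  rcases hi with h | h
  · -- Case A : some t ∈ T has i t = 0
    push_neg at h
    obtain ⟨t, ht, h0⟩ := h
    rw [integral_update_pi μk t hint]
    rw [show (0 : ℝ) = ∫ ξ : Fin N → ℝ, (0:ℝ) ∂(Measure.pi μk) by rw [integral_zero]]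
    apply integral_congr_ae
    filter_upwards [hzero t ht] with ξ hξ
    have hprod : ∀ s : ℝ, ∏ k, φ k (i k) (Function.update ξ t s k)
        = ∏ k, φ k (i k) (ξ k) := by
      intro s
      refine Finset.prod_congr rfl fun k _ => ?_
      rcases eq_or_ne k t with rfl | hk
      · simp [h0, hone k]
      · rw [Function.update_of_ne hk]
    simp_rw [hprod]
    rw [integral_mul_const, hξ, zero_mul]
  · -- Case B : some t ∉ T has i t ≠ 0
    obtain ⟨t, ht, h0⟩ := h
    rw [integral_update_pi μk t hint]
    have hzero' : ∫ s, φ t (i t) s ∂(μk t) = 0 := by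
      have h1 := horth t (i t) 0
      rw [if_neg h0, hone t] at h1
      simpa using h1
    have key : ∀ ξ : Fin N → ℝ,
        ∫ s, u (Function.update ξ t s) * ∏ k, φ k (i k) (Function.update ξ t s k)
          ∂(μk t) = 0 := by
      intro ξ
      have hu : ∀ s : ℝ, u (Function.update ξ t s) = u ξ := by
        intro s
        refine hdep _ _ fun r hr => ?_
        exact Function.update_of_ne (by rintro rfl; exact ht hr) _ _
      have hsplit : ∀ s : ℝ, ∏ k, φ k (i k) (Function.update ξ t s k)
          = φ t (i t) s * ∏ k ∈ Finset.univ.erase t, φ k (i k) (ξ k) := by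
        intro s
        rw [← Finset.mul_prod_erase Finset.univ _ (Finset.mem_univ t)]
        congr 1
        · simp
        · exact Finset.prod_congr rfl fun k hk =>
            by rw [Function.update_of_ne (Finset.ne_of_mem_erase hk)]
      simp_rw [hu, hsplit]
      have : (fun s : ℝ => u ξ * (φ t (i t) s * ∏ k ∈ Finset.univ.erase t, φ k (i k) (ξ k)))
          = fun s : ℝ => (u ξ * ∏ k ∈ Finset.univ.erase t, φ k (i k) (ξ k)) * φ t (i t) s := by
        funext s; ring
      rw [this, integral_const_mul, hzero', mul_zero]
    calc ∫ ξ, ∫ s, u (Function.update ξ t s) * ∏ k, φ k (i k) (Function.update ξ t s k)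
            ∂(μk t) ∂(Measure.pi μk)
        = ∫ _ξ : Fin N → ℝ, (0:ℝ) ∂(Measure.pi μk) := by
          exact integral_congr_ae (Filter.Eventually.of_forall key)
      _ = 0 := integral_zero _ _
end

section
/- (Orthogonality of ANOVA component functions) Let T, S ⊆ {1, …, N} be nonempty subsets with T ≠ S. Let u, v : ℝ^N → ℝ be Borel measurable and square-integrable with respect to μ, where u depends only on the coordinates in T (u(ξ) = u(ξ') whenever ξ_t = ξ'_t for all t ∈ T) and has zero partial mean in every coordinate t ∈ T (for μ-a.e. ξ, ∫_ℝ u(ξ_1, …, ξ_{t-1}, s, ξ_{t+1}, …, ξ_N) dμ_t(s) = 0), and likewise v depends only on the coordinates in S and has zero partial mean in every coordinate t ∈ S. Then u and v are orthogonal in L²(μ): ∫_{ℝ^N} u(ξ) v(ξ) dμ(ξ) = 0. -/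
open MeasureTheory

/-- Auxiliary lemma: if `u` has zero partial mean in coordinate `t` and `w`
does not depend on coordinate `t`, then `∫ u w dμ = 0`. -/
theorem anova_aux
    (N : ℕ) (μk : Fin N → Measure ℝ) [∀ k, IsProbabilityMeasure (μk k)]
    (t : Fin N) (u w : (Fin N → ℝ) → ℝ)
    (hint : Integrable (fun ξ => u ξ * w ξ) (Measure.pi μk))
    (hwdep : ∀ (ξ : Fin N → ℝ) (s : ℝ), w (Function.update ξ t s) = w ξ)
    (huzero : ∀ᵐ ξ ∂(Measure.pi μk),
      ∫ s, u (Function.update ξ t s) ∂(μk t) = 0) :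
    ∫ ξ : Fin N → ℝ, u ξ * w ξ ∂(Measure.pi μk) = 0 := by
  classical
  set p : Fin N → Prop := fun i => i ≠ t with hp
  letI : Unique {i : Fin N // ¬ p i} :=
    ⟨⟨⟨t, not_not_intro rfl⟩⟩, fun a => Subtype.ext (not_not.mp a.2)⟩
  set e := MeasurableEquiv.piEquivPiSubtypeProd (fun _ : Fin N => ℝ) p with he
  have hmp := MeasureTheory.measurePreserving_piEquivPiSubtypeProd μk p
  set ν := ((Measure.pi fun i : Subtype p => μk i).prod
      (Measure.pi fun i : {i // ¬ p i} => μk i)) with hν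
  -- key pointwise identity
  have hsymm : ∀ (x : Subtype p → ℝ) (y : {i // ¬ p i} → ℝ),
      e.symm (x, y) = Function.update (e.symm (x, fun _ => (0:ℝ))) t (y default) := by
    intro x y
    funext i
    by_cases h : p i
    · rw [Function.update_of_ne h]
      simp [e, MeasurableEquiv.piEquivPiSubtypeProd, Equiv.piEquivPiSubtypeProd, dif_pos h]
    · have hit : i = t := not_not.mp h
      subst hit
      rw [Function.update_self]
      have : (⟨i, h⟩ : {j // ¬ p j}) = default := Subsingleton.elim _ _
      simp [e, MeasurableEquiv.piEquivPiSubtypeProd, Equiv.piEquivPiSubtypeProd, h, ← this]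
  have hcomp : ∫ ξ, u ξ * w ξ ∂(Measure.pi μk)
      = ∫ z : (Subtype p → ℝ) × ({i // ¬ p i} → ℝ),
          u (e.symm z) * w (e.symm z) ∂ν := by
    exact ((hmp.symm e).integral_comp e.symm.measurableEmbedding
      (fun ξ => u ξ * w ξ)).symm
  rw [hcomp]
  have hint' : Integrable (fun z : (Subtype p → ℝ) × ({i // ¬ p i} → ℝ) =>
      u (e.symm z) * w (e.symm z)) ν := by
    rw [← hmp.integrable_comp_emb e.measurableEmbedding]
    have hco : ((fun z : (Subtype p → ℝ) × ({i // ¬ p i} → ℝ) =>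
        u (e.symm z) * w (e.symm z)) ∘ e) = fun ξ => u ξ * w ξ := by
      funext ξ
      simp only [Function.comp_apply, MeasurableEquiv.symm_apply_apply]
    rw [hco]; exact hint
  rw [MeasureTheory.integral_prod _ hint']
  -- inner integral computation
  have hinner : ∀ x : Subtype p → ℝ,
      ∫ y, u (e.symm (x, y)) * w (e.symm (x, y))
        ∂(Measure.pi fun i : {i // ¬ p i} => μk i)
      = (∫ s, u (Function.update (e.symm (x, fun _ => (0:ℝ))) t s) ∂(μk t))
          * w (e.symm (x, fun _ => (0:ℝ))) := by
    intro x
    set ξx := e.symm (x, fun _ => (0:ℝ)) with hξx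
    have hmpu := MeasureTheory.measurePreserving_piUnique
      (fun i : {i // ¬ p i} => μk i)
    have := hmpu.integral_comp (MeasurableEquiv.piUnique _).measurableEmbedding
      (fun s : ℝ => u (Function.update ξx t s) * w ξx)
    have hdef : ((default : {i // ¬ p i}) : Fin N) = t := by rfl
    rw [hdef] at this
    rw [← integral_mul_const, ← this]
    refine integral_congr_ae (Filter.Eventually.of_forall fun y => ?_)
    have h1 : e.symm (x, y) = Function.update ξx t (y default) := hsymm x y
    have h2 : (MeasurableEquiv.piUnique (fun _ : {i // ¬ p i} => ℝ)) y = y default := rfl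
    simp only [h1, h2, hwdep]
  -- a.e. vanishing of the inner integral
  have hzero' : ∀ᵐ z ∂ν,
      (∫ s, u (Function.update (e.symm (z.1, fun _ => (0:ℝ))) t s) ∂(μk t)) = 0 := by
    have hq := (hmp.symm e).quasiMeasurePreserving
    have := hq.ae huzero
    refine this.mono fun z hz => ?_
    have : Function.update (e.symm z) t = Function.update (e.symm (z.1, fun _ => (0:ℝ))) t := by
      funext s
      have h1 : e.symm z = Function.update (e.symm (z.1, fun _ => (0:ℝ))) t (z.2 default) := by
        rw [← hsymm z.1 z.2]
      rw [h1, Function.update_idem]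
    rwa [this] at hz
  have hzero'' : ∀ᵐ x ∂(Measure.pi fun i : Subtype p => μk i),
      (∫ s, u (Function.update (e.symm (x, fun _ => (0:ℝ))) t s) ∂(μk t)) = 0 := by
    have := MeasureTheory.Measure.ae_ae_of_ae_prod hzero'
    refine this.mono fun x hx => ?_
    exact Filter.eventually_const.mp hx
  calc ∫ x, ∫ y, u (e.symm (x, y)) * w (e.symm (x, y))
        ∂(Measure.pi fun i : {i // ¬ p i} => μk i)
        ∂(Measure.pi fun i : Subtype p => μk i)
      = ∫ x, (0:ℝ) ∂(Measure.pi fun i : Subtype p => μk i) := by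
        refine integral_congr_ae (hzero''.mono fun x hx => ?_)
        simp only [hinner x, hx, zero_mul]
    _ = 0 := integral_zero _ _

/-- Orthogonality of ANOVA component functions: If `T ≠ S` are
nonempty subsets of `{1,…,N}`, `u` is an ANOVA component function for `T` and
`v` is an ANOVA component function for `S`, then `∫ u v dμ = 0`. -/
theorem anova_components_orthogonal
    (N : ℕ) (μk : Fin N → Measure ℝ) [∀ k, IsProbabilityMeasure (μk k)]
    (T S : Set (Fin N)) (hT : T.Nonempty) (hS : S.Nonempty) (hTS : T ≠ S)
    (u v : (Fin N → ℝ) → ℝ)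
    (humeas : Measurable u) (hvmeas : Measurable v)
    (hu2 : MemLp u 2 (Measure.pi μk)) (hv2 : MemLp v 2 (Measure.pi μk))
    (hudep : ∀ ξ ξ' : Fin N → ℝ, (∀ t ∈ T, ξ t = ξ' t) → u ξ = u ξ')
    (huzero : ∀ t ∈ T, ∀ᵐ ξ ∂(Measure.pi μk),
      ∫ s, u (Function.update ξ t s) ∂(μk t) = 0)
    (hvdep : ∀ ξ ξ' : Fin N → ℝ, (∀ t ∈ S, ξ t = ξ' t) → v ξ = v ξ')
    (hvzero : ∀ t ∈ S, ∀ᵐ ξ ∂(Measure.pi μk),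
      ∫ s, v (Function.update ξ t s) ∂(μk t) = 0) :
    ∫ ξ : Fin N → ℝ, u ξ * v ξ ∂(Measure.pi μk) = 0 := by
  have hint : Integrable (fun ξ => u ξ * v ξ) (Measure.pi μk) := by
    have h1 : MemLp (u • v) 1 (Measure.pi μk) :=
      hv2.smul hu2 (hpqr := ⟨by rw [ENNReal.inv_two_add_inv_two, inv_one]⟩)
    have : (u • v) = fun ξ => u ξ * v ξ := rfl
    rw [this] at h1
    exact memLp_one_iff_integrable.mp h1
  by_cases hsub : T ⊆ S
  · have hns : ¬ S ⊆ T := fun h => hTS (hsub.antisymm h)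
    obtain ⟨t, htS, htT⟩ := Set.not_subset.mp hns
    have hudep' : ∀ (ξ : Fin N → ℝ) (s : ℝ), u (Function.update ξ t s) = u ξ := by
      intro ξ s
      refine hudep _ _ fun t' ht' => ?_
      exact Function.update_of_ne (fun h : t' = t => htT (h ▸ ht')) _ _
    have := anova_aux N μk t v u
      (by simpa [mul_comm] using hint)
      hudep' (hvzero t htS)
    calc ∫ ξ, u ξ * v ξ ∂(Measure.pi μk)
        = ∫ ξ, v ξ * u ξ ∂(Measure.pi μk) := by simp [mul_comm]
      _ = 0 := this
  · obtain ⟨t, htT, htS⟩ := Set.not_subset.mp hsub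
    have hvdep' : ∀ (ξ : Fin N → ℝ) (s : ℝ), v (Function.update ξ t s) = v ξ := by
      intro ξ s
      refine hvdep _ _ fun t' ht' => ?_
      exact Function.update_of_ne (fun h : t' = t => htS (h ▸ ht')) _ _
    exact anova_aux N μk t u v hint hvdep' (huzero t htT)
end

section
/- (Variance additivity of the ANOVA decomposition) Let 𝒯 be a finite collection of distinct nonempty subsets of {1, …, N}, let c_0 ∈ ℝ, and for each T ∈ 𝒯 let u_T : ℝ^N → ℝ be Borel measurable, square-integrable with respect to μ, depending only on the coordinates in T (u_T(ξ) = u_T(ξ') whenever ξ_t = ξ'_t for all t ∈ T), and having zero partial mean in every coordinate t ∈ T (for μ-a.e. ξ, ∫_ℝ u_T(ξ_1, …, ξ_{t-1}, s, ξ_{t+1}, …, ξ_N) dμ_t(s) = 0). Define u(ξ) = c_0 + Σ_{T ∈ 𝒯} u_T(ξ). Then ∫_{ℝ^N} u dμ = c_0 and the variance of u is the sum of the variances of the component functions: ∫_{ℝ^N} u² dμ − (∫_{ℝ^N} u dμ)² = Σ_{T ∈ 𝒯} ∫_{ℝ^N} u_T² dμ. -/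
open MeasureTheory

section Aux

variable {N : ℕ} {μk : Fin N → Measure ℝ} [∀ k, IsProbabilityMeasure (μk k)]

lemma map_update_pi (t : Fin N) :
    Measure.map (fun p : (Fin N → ℝ) × ℝ => Function.update p.1 t p.2)
      ((Measure.pi μk).prod (μk t)) = Measure.pi μk := by
  have hm : Measurable (fun p : (Fin N → ℝ) × ℝ => Function.update p.1 t p.2) :=
    measurable_update'
  refine (Measure.pi_eq fun s hs => ?_).symm
  rw [Measure.map_apply hm (MeasurableSet.univ_pi hs)]
  have hpre : (fun p : (Fin N → ℝ) × ℝ => Function.update p.1 t p.2) ⁻¹'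
      (Set.pi Set.univ s) =
      (Set.pi Set.univ (Function.update s t Set.univ)) ×ˢ (s t) := by
    ext p
    simp only [Set.mem_preimage, Set.mem_pi, Set.mem_univ, forall_true_left,
      Set.mem_prod]
    constructor
    · intro h
      refine ⟨fun i => ?_, by simpa using h t⟩
      rcases eq_or_ne i t with rfl | hit
      · simp
      · simpa [Function.update_of_ne hit] using h i
    · rintro ⟨h1, h2⟩ i
      rcases eq_or_ne i t with rfl | hit
      · simpa using h2
      · simpa [Function.update_of_ne hit] using h1 i
  rw [hpre, Measure.prod_prod, Measure.pi_pi]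
  have : ∀ i, μk i (Function.update s t Set.univ i) =
      Function.update (fun i => μk i (s i)) t 1 i := by
    intro i
    rcases eq_or_ne i t with rfl | hit
    · simp
    · simp [Function.update_of_ne hit]
  rw [Finset.prod_congr rfl fun i _ => this i, Finset.prod_update_of_mem (Finset.mem_univ t),
    one_mul, mul_comm, Finset.sdiff_singleton_eq_erase,
    ← Finset.mul_prod_erase Finset.univ (fun i => μk i (s i)) (Finset.mem_univ t)]

/-- Key lemma: an integrable function whose partial mean in some coordinate vanishes a.e.
has total integral zero. -/
lemma integral_eq_zero_of_partial_mean_zero {g : (Fin N → ℝ) → ℝ}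
    (_hgm : Measurable g) (hgi : Integrable g (Measure.pi μk)) (t : Fin N)
    (hz : ∀ᵐ ξ ∂(Measure.pi μk), ∫ s, g (Function.update ξ t s) ∂(μk t) = 0) :
    ∫ ξ, g ξ ∂(Measure.pi μk) = 0 := by
  have hm : Measurable (fun p : (Fin N → ℝ) × ℝ => Function.update p.1 t p.2) :=
    measurable_update'
  have hmap := map_update_pi (μk := μk) t
  have hgi_map : Integrable g (Measure.map (fun p : (Fin N → ℝ) × ℝ =>
      Function.update p.1 t p.2) ((Measure.pi μk).prod (μk t))) := by
    rw [hmap]; exact hgi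
  have hgi' : Integrable (fun p : (Fin N → ℝ) × ℝ => g (Function.update p.1 t p.2))
      ((Measure.pi μk).prod (μk t)) :=
    (integrable_map_measure hgi_map.aestronglyMeasurable hm.aemeasurable).mp hgi_map
  calc ∫ ξ, g ξ ∂(Measure.pi μk)
      = ∫ ξ, g ξ ∂(Measure.map (fun p : (Fin N → ℝ) × ℝ => Function.update p.1 t p.2)
          ((Measure.pi μk).prod (μk t))) := by rw [hmap]
    _ = ∫ p : (Fin N → ℝ) × ℝ, g (Function.update p.1 t p.2)
          ∂((Measure.pi μk).prod (μk t)) :=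
        integral_map hm.aemeasurable (by rw [hmap]; exact hgi.aestronglyMeasurable)
    _ = ∫ ξ, ∫ s, g (Function.update ξ t s) ∂(μk t) ∂(Measure.pi μk) :=
        integral_prod _ hgi'
    _ = ∫ ξ, (0 : ℝ) ∂(Measure.pi μk) := integral_congr_ae hz
    _ = 0 := integral_zero _ _

end Aux

/-- Variance additivity of the ANOVA decomposition: If
`u = c₀ + Σ_{T ∈ 𝒯} u_T` where each `u_T` is an ANOVA component function for the
nonempty set `T`, then `∫ u dμ = c₀` and
`Var(u) = ∫ u² dμ − (∫ u dμ)² = Σ_{T ∈ 𝒯} ∫ u_T² dμ`. -/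
theorem anova_variance_additivity
    (N : ℕ) (μk : Fin N → Measure ℝ) [∀ k, IsProbabilityMeasure (μk k)]
    (𝒯 : Finset (Finset (Fin N))) (h𝒯 : ∀ T ∈ 𝒯, T.Nonempty)
    (c₀ : ℝ)
    (uT : Finset (Fin N) → (Fin N → ℝ) → ℝ)
    (hmeas : ∀ T ∈ 𝒯, Measurable (uT T))
    (h2 : ∀ T ∈ 𝒯, MemLp (uT T) 2 (Measure.pi μk))
    (hdep : ∀ T ∈ 𝒯, ∀ ξ ξ' : Fin N → ℝ,
      (∀ t ∈ T, ξ t = ξ' t) → uT T ξ = uT T ξ')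
    (hzero : ∀ T ∈ 𝒯, ∀ t ∈ T, ∀ᵐ ξ ∂(Measure.pi μk),
      ∫ s, uT T (Function.update ξ t s) ∂(μk t) = 0)
    (u : (Fin N → ℝ) → ℝ)
    (hu : ∀ ξ : Fin N → ℝ, u ξ = c₀ + ∑ T ∈ 𝒯, uT T ξ) :
    ∫ ξ : Fin N → ℝ, u ξ ∂(Measure.pi μk) = c₀ ∧
      (∫ ξ : Fin N → ℝ, (u ξ) ^ 2 ∂(Measure.pi μk)) -
          (∫ ξ : Fin N → ℝ, u ξ ∂(Measure.pi μk)) ^ 2 =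
        ∑ T ∈ 𝒯, ∫ ξ : Fin N → ℝ, (uT T ξ) ^ 2 ∂(Measure.pi μk) := by
  set π := Measure.pi μk with hπ
  -- integrability facts
  have hint : ∀ T ∈ 𝒯, Integrable (uT T) π := fun T hT =>
    (h2 T hT).integrable (by norm_num)
  have hmul : ∀ S ∈ 𝒯, ∀ T ∈ 𝒯, Integrable (fun ξ => uT S ξ * uT T ξ) π := by
    intro S hS T hT
    have := ((h2 T hT).smul (h2 S hS)
      (p := 2) (q := 2) (r := 1))
    have h1 : MemLp (fun ξ => uT S ξ * uT T ξ) 1 π := by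
      exact this
    exact memLp_one_iff_integrable.mp h1
  -- each component has integral zero
  have hIT : ∀ T ∈ 𝒯, ∫ ξ, uT T ξ ∂π = 0 := by
    intro T hT
    obtain ⟨t, ht⟩ := h𝒯 T hT
    exact integral_eq_zero_of_partial_mean_zero (hmeas T hT) (hint T hT) t
      (hzero T hT t ht)
  -- orthogonality
  have horth0 : ∀ S ∈ 𝒯, ∀ T ∈ 𝒯, ∀ t ∈ T, t ∉ S →
      ∫ ξ, uT S ξ * uT T ξ ∂π = 0 := by
    intro S hS T hT t ht hts
    refine integral_eq_zero_of_partial_mean_zero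
      ((hmeas S hS).mul (hmeas T hT)) (hmul S hS T hT) t ?_
    filter_upwards [hzero T hT t ht] with ξ hξ
    have hSfix : ∀ s : ℝ, uT S (Function.update ξ t s) = uT S ξ := by
      intro s
      refine hdep S hS _ _ fun i hi => Function.update_of_ne ?_ _ _
      rintro rfl
      exact hts hi
    calc ∫ s, uT S (Function.update ξ t s) * uT T (Function.update ξ t s) ∂(μk t)
        = ∫ s, uT S ξ * uT T (Function.update ξ t s) ∂(μk t) := by
          simp_rw [hSfix]
      _ = uT S ξ * ∫ s, uT T (Function.update ξ t s) ∂(μk t) := integral_const_mul _ _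
      _ = 0 := by rw [hξ, mul_zero]
  have horth : ∀ S ∈ 𝒯, ∀ T ∈ 𝒯, S ≠ T → ∫ ξ, uT S ξ * uT T ξ ∂π = 0 := by
    intro S hS T hT hST
    by_cases h : ∃ t ∈ T, t ∉ S
    · obtain ⟨t, htT, htS⟩ := h
      exact horth0 S hS T hT t htT htS
    · push_neg at h
      have hTS : T ⊆ S := h
      obtain ⟨t, htS, htT⟩ :=
        Finset.exists_of_ssubset (hTS.ssubset_of_ne fun e => hST e.symm)
      have h0 := horth0 T hT S hS t htS htT
      calc ∫ ξ, uT S ξ * uT T ξ ∂π = ∫ ξ, uT T ξ * uT S ξ ∂π := by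
            simp_rw [mul_comm (uT S _) (uT T _)]
        _ = 0 := h0
  -- ∫ u = c₀
  have hintsum : Integrable (fun ξ => ∑ T ∈ 𝒯, uT T ξ) π :=
    integrable_finset_sum _ fun T hT => hint T hT
  have hEu : ∫ ξ, u ξ ∂π = c₀ := by
    have : ∫ ξ, u ξ ∂π = ∫ ξ, (c₀ + ∑ T ∈ 𝒯, uT T ξ) ∂π :=
      integral_congr_ae (Filter.Eventually.of_forall fun ξ => hu ξ)
    rw [this, integral_add (integrable_const _) hintsum, integral_const,
      integral_finset_sum _ fun T hT => hint T hT, Finset.sum_congr rfl hIT]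
    simp
  refine ⟨hEu, ?_⟩
  have hsq : ∀ ξ, (u ξ) ^ 2 = c₀ ^ 2 + 2 * c₀ * (∑ T ∈ 𝒯, uT T ξ) +
      ∑ S ∈ 𝒯, ∑ T ∈ 𝒯, uT S ξ * uT T ξ := by
    intro ξ
    have hss : (∑ T ∈ 𝒯, uT T ξ) ^ 2 = ∑ S ∈ 𝒯, ∑ T ∈ 𝒯, uT S ξ * uT T ξ := by
      rw [sq, Finset.sum_mul_sum]
    rw [hu ξ, add_sq, hss]
  have hiSS : Integrable (fun ξ => ∑ S ∈ 𝒯, ∑ T ∈ 𝒯, uT S ξ * uT T ξ) π :=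
    integrable_finset_sum _ fun S hS => integrable_finset_sum _ fun T hT => hmul S hS T hT
  have hEu2 : ∫ ξ, (u ξ) ^ 2 ∂π = c₀ ^ 2 + ∑ T ∈ 𝒯, ∫ ξ, (uT T ξ) ^ 2 ∂π := by
    have hrw : ∫ ξ, (u ξ) ^ 2 ∂π = ∫ ξ, (c₀ ^ 2 + 2 * c₀ * (∑ T ∈ 𝒯, uT T ξ) +
        ∑ S ∈ 𝒯, ∑ T ∈ 𝒯, uT S ξ * uT T ξ) ∂π :=
      integral_congr_ae (Filter.Eventually.of_forall fun ξ => hsq ξ)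
    have hB : Integrable (fun ξ => 2 * c₀ * ∑ T ∈ 𝒯, uT T ξ) π := hintsum.const_mul _
    have hA : Integrable (fun ξ => c₀ ^ 2 + 2 * c₀ * ∑ T ∈ 𝒯, uT T ξ) π :=
      (integrable_const _).add hB
    rw [hrw, integral_add hA hiSS,
      integral_add (integrable_const _) hB, integral_const,
      integral_const_mul, integral_finset_sum _ fun T hT => hint T hT,
      Finset.sum_congr rfl hIT, integral_finset_sum _
        (fun S hS => integrable_finset_sum _ fun T hT => hmul S hS T hT)]
    have hdiag : ∀ S ∈ 𝒯, (∑ T ∈ 𝒯, ∫ ξ, uT S ξ * uT T ξ ∂π) =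
        ∫ ξ, (uT S ξ) ^ 2 ∂π := by
      intro S hS
      rw [Finset.sum_eq_single_of_mem S hS fun T hT hTS => horth S hS T hT fun e => hTS e.symm]
      refine integral_congr_ae (Filter.Eventually.of_forall fun ξ => ?_)
      simp [sq]
    rw [Finset.sum_congr rfl (fun S hS => integral_finset_sum _ fun T hT => hmul S hS T hT),
      Finset.sum_congr rfl hdiag]
    simp
  rw [hEu, hEu2]
  ring
end
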